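/- Let L be the Laplacian matrix of a connected undirected graph on N ≥ 2 vertices, partitioned as [[L₁₁, L_{1,2:N}], [L_{1,2:N}ᵀ, L_{2:N,2:N}]] with L₁₁ ∈ ℝ. Then there exist c₁ > 0 and μ > 0 such that the matrix A(c₁) = −(L_{2:N,2:N} − c₁·𝟙_{N−1} L_{1,2:N}) satisfies A(c₁) + A(c₁)ᵀ ≤ −μ·I_{N−1}, i.e. xᵀ(A(c₁) + A(c₁)ᵀ)x ≤ −μ|x|² for all x ∈ ℝ^{N−1}. -/

import Mathlib

open Matrix Finset

lemma quad_homog {m : ℕ} (M : Matrix (Fin m) (Fin m) ℝ) (c : ℝ) (x : Fin m → ℝ) :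
    (c • x) ⬝ᵥ M *ᵥ (c • x) = c ^ 2 * (x ⬝ᵥ M *ᵥ x) := by
  rw [Matrix.mulVec_smul, dotProduct_smul, smul_dotProduct, smul_eq_mul, smul_eq_mul]
  ring

lemma exists_quad_lb {m : ℕ} (hm : 1 ≤ m) (M : Matrix (Fin m) (Fin m) ℝ)
    (hpos : ∀ x : Fin m → ℝ, x ≠ 0 → 0 < x ⬝ᵥ M *ᵥ x) :
    ∃ lam > (0:ℝ), ∀ x : Fin m → ℝ, lam * (x ⬝ᵥ x) ≤ x ⬝ᵥ M *ᵥ x := by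
  haveI : Nonempty (Fin m) := ⟨⟨0, hm⟩⟩
  have hcont : Continuous fun x : EuclideanSpace ℝ (Fin m) =>
      (x : Fin m → ℝ) ⬝ᵥ M *ᵥ (x : Fin m → ℝ) := by
    show Continuous fun x : EuclideanSpace ℝ (Fin m) => ∑ i, x i * ∑ j, M i j * x j
    exact continuous_finset_sum _ fun i _ =>
      ((EuclideanSpace.proj i).continuous).mul
        (continuous_finset_sum _ fun j _ =>
          continuous_const.mul (EuclideanSpace.proj j).continuous)
  have hne : (Metric.sphere (0:EuclideanSpace ℝ (Fin m)) 1).Nonempty :=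
    NormedSpace.sphere_nonempty.mpr zero_le_one
  obtain ⟨x₀, hx₀, hmin⟩ := (isCompact_sphere (0:EuclideanSpace ℝ (Fin m)) 1).exists_isMinOn hne
    hcont.continuousOn
  have hx₀norm : ‖x₀‖ = 1 := by simpa using hx₀
  have hx₀ne : (x₀ : Fin m → ℝ) ≠ 0 := by
    intro h
    have : x₀ = 0 := by simpa using h
    rw [this] at hx₀norm; simp at hx₀norm
  refine ⟨x₀ ⬝ᵥ M *ᵥ x₀, hpos _ hx₀ne, fun x => ?_⟩
  set lam := (x₀ : Fin m → ℝ) ⬝ᵥ M *ᵥ x₀ with hlam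
  by_cases hx : x = 0
  · simp [hx]
  · set xE : EuclideanSpace ℝ (Fin m) := WithLp.toLp 2 x with hxE
    have hxEne : xE ≠ 0 := fun h => hx (by simpa [hxE] using congrArg WithLp.ofLp h)
    have hnorm : 0 < ‖xE‖ := norm_pos_iff.mpr hxEne
    have hmem : (‖xE‖⁻¹ • xE) ∈ Metric.sphere (0:EuclideanSpace ℝ (Fin m)) 1 := by
      simp [norm_smul, abs_of_pos (inv_pos.mpr hnorm), inv_mul_cancel₀ (ne_of_gt hnorm)]
    have hle := hmin hmem
    have h1 : lam ≤ (‖xE‖⁻¹ • x) ⬝ᵥ M *ᵥ (‖xE‖⁻¹ • x) := hle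
    rw [quad_homog] at h1
    have hss : x ⬝ᵥ x = ‖xE‖ ^ 2 := by
      have : (inner ℝ xE xE : ℝ) = ‖xE‖ ^ 2 := real_inner_self_eq_norm_sq xE
      rw [← this, PiLp.inner_apply]
      simp [dotProduct, RCLike.inner_apply, starRingEnd_apply, hxE, sq]
    have h2 : (‖xE‖⁻¹) ^ 2 = (x ⬝ᵥ x)⁻¹ := by rw [hss]; simp
    rw [h2] at h1
    have hs : 0 < x ⬝ᵥ x := by rw [hss]; positivity
    calc lam * (x ⬝ᵥ x) ≤ ((x ⬝ᵥ x)⁻¹ * (x ⬝ᵥ M *ᵥ x)) * (x ⬝ᵥ x) := by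
          exact mul_le_mul_of_nonneg_right h1 hs.le
      _ = x ⬝ᵥ M *ᵥ x := by field_simp

lemma quad_abs_le {m : ℕ} (B : Matrix (Fin m) (Fin m) ℝ) (x : Fin m → ℝ) :
    |x ⬝ᵥ B *ᵥ x| ≤ (∑ i, ∑ j, |B i j|) * (x ⬝ᵥ x) := by
  have hsq : ∀ i : Fin m, x i ^ 2 ≤ x ⬝ᵥ x := fun i => by
    have := Finset.single_le_sum (f := fun k => x k * x k)
      (fun k _ => mul_self_nonneg (x k)) (mem_univ i)
    simpa [dotProduct, sq] using this
  have hxy : ∀ i j, |x i * x j| ≤ x ⬝ᵥ x := fun i j => by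
    rw [abs_mul]
    nlinarith [sq_nonneg (|x i| - |x j|), sq_abs (x i), sq_abs (x j), hsq i, hsq j,
      abs_nonneg (x i), abs_nonneg (x j)]
  have hrw : x ⬝ᵥ B *ᵥ x = ∑ i, ∑ j, x i * (B i j * x j) := by
    simp [dotProduct, mulVec, Finset.mul_sum]
  rw [hrw]
  calc |∑ i, ∑ j, x i * (B i j * x j)| ≤ ∑ i, |∑ j, x i * (B i j * x j)| :=
        Finset.abs_sum_le_sum_abs _ _
    _ ≤ ∑ i, ∑ j, |B i j| * (x ⬝ᵥ x) := by
        refine Finset.sum_le_sum fun i _ => ?_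
        calc |∑ j, x i * (B i j * x j)| ≤ ∑ j, |x i * (B i j * x j)| :=
              Finset.abs_sum_le_sum_abs _ _
          _ ≤ ∑ j, |B i j| * (x ⬝ᵥ x) := by
              refine Finset.sum_le_sum fun j _ => ?_
              have : |x i * (B i j * x j)| = |B i j| * |x i * x j| := by
                rw [abs_mul, abs_mul, abs_mul]; ring
              rw [this]
              exact mul_le_mul_of_nonneg_left (hxy i j) (abs_nonneg _)
    _ = (∑ i, ∑ j, |B i j|) * (x ⬝ᵥ x) := by
        rw [Finset.sum_mul]
        exact Finset.sum_congr rfl fun i _ => (Finset.sum_mul _ _ _).symm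

lemma sub_posdef {m : ℕ} (G : SimpleGraph (Fin (m + 1))) [DecidableRel G.Adj]
    (hconn : G.Connected) (x : Fin m → ℝ) (hx : x ≠ 0) :
    0 < x ⬝ᵥ (Matrix.of fun i j : Fin m => (G.lapMatrix ℝ) i.succ j.succ) *ᵥ x := by
  set y : Fin (m + 1) → ℝ := Fin.cases 0 x with hy
  have hquad : x ⬝ᵥ (Matrix.of fun i j : Fin m => (G.lapMatrix ℝ) i.succ j.succ) *ᵥ x
      = y ⬝ᵥ (G.lapMatrix ℝ) *ᵥ y := by
    simp [dotProduct, mulVec, Fin.sum_univ_succ, hy]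
  rw [hquad]
  have hsemi := (SimpleGraph.posSemidef_lapMatrix ℝ G).dotProduct_mulVec_nonneg y
  rw [star_trivial] at hsemi
  rcases lt_or_eq_of_le hsemi with h | h
  · exact h
  · exfalso
    have hz : Matrix.toLinearMap₂' ℝ (G.lapMatrix ℝ) y y = 0 := by
      rw [Matrix.toLinearMap₂'_apply']
      exact h.symm
    rw [SimpleGraph.lapMatrix_toLinearMap₂'_apply'_eq_zero_iff_forall_reachable] at hz
    apply hx
    funext i
    have := hz i.succ 0 (hconn.preconnected i.succ 0)
    simpa [hy] using this

/-- **Lemma 2 of the paper.** Let `L` be the Laplacian matrix of a connected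
undirected graph on `N = m+1 ≥ 2` vertices, partitioned as
`[[L₁₁, L_{1,2:N}], [L_{1,2:N}ᵀ, L_{2:N,2:N}]]`.  Then there exist `c₁ > 0` and `μ > 0` such
that `A(c₁) = −(L_{2:N,2:N} − c₁ 𝟙_{N−1} L_{1,2:N})` satisfies
`xᵀ (A(c₁) + A(c₁)ᵀ) x ≤ −μ |x|²` for all `x ∈ ℝ^{N−1}`. -/
theorem stmt4_Ac1_negative_definite (m : ℕ) (hm : 1 ≤ m)
    (G : SimpleGraph (Fin (m + 1))) [DecidableRel G.Adj]
    (hconn : G.Connected)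
    (L : Matrix (Fin (m + 1)) (Fin (m + 1)) ℝ)
    (hL : L = G.lapMatrix ℝ) :
    ∃ c₁ > (0 : ℝ), ∃ μ > (0 : ℝ),
      ∀ x : Fin m → ℝ,
        x ⬝ᵥ
            (((-(Matrix.of fun i j : Fin m => L i.succ j.succ - c₁ * L 0 j.succ)) +
                (-(Matrix.of fun i j : Fin m => L i.succ j.succ - c₁ * L 0 j.succ))ᵀ).mulVec
              x) ≤
          -μ * (x ⬝ᵥ x) := by
  have hsymm : ∀ i j : Fin (m + 1), L i j = L j i := by
    intro i j
    rw [hL]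
    exact (G.isSymm_lapMatrix (R := ℝ)).apply j i
  set M : Matrix (Fin m) (Fin m) ℝ :=
    Matrix.of fun i j : Fin m => L i.succ j.succ with hM
  have hMpos : ∀ x : Fin m → ℝ, x ≠ 0 → 0 < x ⬝ᵥ M *ᵥ x := by
    intro x hx
    have := sub_posdef G hconn x hx
    rw [hM, hL]
    exact this
  obtain ⟨lam, hlam, hlb⟩ := exists_quad_lb hm M hMpos
  set B : Matrix (Fin m) (Fin m) ℝ :=
    Matrix.of fun i j : Fin m => L 0 i.succ + L 0 j.succ with hB
  set D : ℝ := ∑ i, ∑ j, |B i j| with hD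
  have hD0 : 0 ≤ D := Finset.sum_nonneg fun i _ =>
    Finset.sum_nonneg fun j _ => abs_nonneg _
  set C : ℝ := D + 1 with hC
  have hC0 : 0 < C := by linarith
  refine ⟨lam / C, div_pos hlam hC0, lam, hlam, fun x => ?_⟩
  set c₁ : ℝ := lam / C with hc₁
  have hc₁0 : 0 < c₁ := div_pos hlam hC0
  -- matrix identity
  have hmat : ((-(Matrix.of fun i j : Fin m => L i.succ j.succ - c₁ * L 0 j.succ)) +
      (-(Matrix.of fun i j : Fin m => L i.succ j.succ - c₁ * L 0 j.succ))ᵀ)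
      = (-2 : ℝ) • M + c₁ • B := by
    ext i j
    simp only [Matrix.add_apply, Matrix.neg_apply, Matrix.transpose_apply, Matrix.of_apply,
      Matrix.smul_apply, smul_eq_mul, hM, hB]
    rw [hsymm j.succ i.succ]
    ring
  rw [hmat]
  have hexp : x ⬝ᵥ ((-2 : ℝ) • M + c₁ • B) *ᵥ x
      = -2 * (x ⬝ᵥ M *ᵥ x) + c₁ * (x ⬝ᵥ B *ᵥ x) := by
    rw [Matrix.add_mulVec, dotProduct_add, Matrix.smul_mulVec,
      Matrix.smul_mulVec, dotProduct_smul, dotProduct_smul, smul_eq_mul, smul_eq_mul]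
  rw [hexp]
  have hs : 0 ≤ x ⬝ᵥ x := Finset.sum_nonneg fun k _ => mul_self_nonneg (x k)
  have hq := hlb x
  have hbB : x ⬝ᵥ B *ᵥ x ≤ D * (x ⬝ᵥ x) := le_trans (le_abs_self _) (quad_abs_le B x)
  have h1 : c₁ * (x ⬝ᵥ B *ᵥ x) ≤ c₁ * (D * (x ⬝ᵥ x)) :=
    mul_le_mul_of_nonneg_left hbB hc₁0.le
  have h2 : c₁ * D ≤ lam := by
    rw [hc₁, div_mul_eq_mul_div, div_le_iff₀ hC0]
    nlinarith
  nlinarith [mul_le_mul_of_nonneg_right h2 hs]
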